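/- Let u ∈ 𝔽_q^n, let e be a vector of minimum Hamming weight such that u − e ∈ RS_{q,α}(k), let t be the Hamming weight of e, and assume t ≤ (n−k)/2. Let λ_u be a monic polynomial of minimal degree in Λ, let d_u = deg f_u, and write λ_u·f_u = ζ_0 + ζ_1 x + … + ζ_{d_u+t} x^{d_u+t}. Set μ = ζ_n + ζ_{n+1} x + … + ζ_{d_u+t} x^{d_u+t−n}. Then λ_u divides λ_u·f_u − (x^n − 1)·μ, the polynomial g_c := (λ_u·f_u − (x^n − 1)·μ)/λ_u has degree less than k, and (g_c(1), g_c(α), g_c(α²), …, g_c(α^{n−1})) = u − e, the codeword of RS_{q,α}(k) at minimum Hamming distance from u. -/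

import Mathlib

open Polynomial

/-- correctness of the decoding algorithm.  With `t ≤ (n-k)/2` the number
of errors, `λ_u` monic of minimal degree in `Λ`, `d_u = deg f_u`,
`ζ_m = (λ_u f_u).coeff m` and `μ = ζ_n + ζ_{n+1} x + … + ζ_{d_u+t} x^{d_u+t-n}`,
the polynomial `λ_u` divides `λ_u f_u - (x^n - 1) μ`, the quotient `g_c` has degree
`< k`, and `(g_c(1), g_c(α), …, g_c(α^{n-1})) = u - e`. -/
theorem stmt_17 {F : Type*} [Field F] [Fintype F] [DecidableEq F] (α : F)
    (n k : ℕ) (hn : n = Fintype.card F - 1) (hα : orderOf α = n)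
    (hk1 : 1 ≤ k) (hkn : k ≤ n)
    (u e : Fin n → F)
    (he : ∃ a : Polynomial F, a.degree < (k : WithBot ℕ) ∧
      ∀ i : Fin n, u i - e i = a.eval (α ^ (i : ℕ)))
    (hmin : ∀ e' : Fin n → F,
      (∃ a : Polynomial F, a.degree < (k : WithBot ℕ) ∧
        ∀ i : Fin n, u i - e' i = a.eval (α ^ (i : ℕ))) →
      (Finset.univ.filter fun i => e i ≠ 0).card ≤
        (Finset.univ.filter fun i => e' i ≠ 0).card)
    (t : ℕ) (htw : t = (Finset.univ.filter fun i => e i ≠ 0).card)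
    (h2t : 2 * t ≤ n - k)
    (fu : Polynomial F)
    (hfu_deg : fu.degree < (n : WithBot ℕ))
    (hfu_val : ∀ i : Fin n, fu.eval (α ^ (i : ℕ)) = u i)
    (hu : Polynomial F)
    (hhu : ∀ m : ℕ, hu.coeff m = if m < k then 0 else fu.coeff m)
    (lu : Polynomial F) (hlu_monic : lu.Monic)
    (hlu_mem : ∃ g : Polynomial F, g.degree < (k : WithBot ℕ) ∧
      (Polynomial.X ^ n - 1) ∣ lu * (hu + g))
    (hlu_min : ∀ μ : Polynomial F, μ.Monic →
      (∃ g : Polynomial F, g.degree < (k : WithBot ℕ) ∧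
        (Polynomial.X ^ n - 1) ∣ μ * (hu + g)) →
      lu.degree ≤ μ.degree) :
    let du : ℕ := fu.natDegree
    let μ : Polynomial F := ∑ m ∈ Finset.Icc n (du + t),
      Polynomial.C ((lu * fu).coeff m) * Polynomial.X ^ (m - n)
    let gc : Polynomial F := (lu * fu - (Polynomial.X ^ n - 1) * μ) /ₘ lu
    lu ∣ (lu * fu - (Polynomial.X ^ n - 1) * μ) ∧
    gc.degree < (k : WithBot ℕ) ∧
    ∀ i : Fin n, gc.eval (α ^ (i : ℕ)) = u i - e i := by
  intro du μ gc
  classical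
  obtain ⟨a, ha_deg, ha_val⟩ := he
  have hn0 : 0 < n := lt_of_lt_of_le hk1 hkn
  have hαn : α ^ n = 1 := by rw [← hα]; exact pow_orderOf_eq_one α
  have hα0 : α ≠ 0 := by
    intro h; rw [h, zero_pow hn0.ne'] at hαn; exact zero_ne_one hαn
  -- injectivity of i ↦ α^i on Fin n
  have hinj : Function.Injective fun i : Fin n => α ^ (i : ℕ) := by
    have key : ∀ i j : Fin n, (i : ℕ) ≤ (j : ℕ) → α ^ (i : ℕ) = α ^ (j : ℕ) → i = j := by
      intro i j hle hij
      have h1 : α ^ ((j : ℕ) - i) * α ^ (i : ℕ) = 1 * α ^ (i : ℕ) := by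
        rw [← pow_add, Nat.sub_add_cancel hle, one_mul, hij]
      have h2 : α ^ ((j : ℕ) - i) = 1 := mul_right_cancel₀ (pow_ne_zero _ hα0) h1
      have h3 : n ∣ (j : ℕ) - i := by have h := orderOf_dvd_of_pow_eq_one h2; rwa [hα] at h
      have h4 : (j : ℕ) - i < n := lt_of_le_of_lt (Nat.sub_le _ _) j.isLt
      have h5 : (j : ℕ) - i = 0 := Nat.eq_zero_of_dvd_of_lt h3 h4
      exact Fin.ext (by omega)
    intro i j hij
    rcases le_total (i : ℕ) (j : ℕ) with h | h
    · exact key i j h hij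
    · exact (key j i h hij.symm).symm
  have hXn_monic : ((X : Polynomial F) ^ n - 1).Monic := by
    have h := monic_X_pow_sub_C (1 : F) hn0.ne'
    simpa using h
  have hXn_deg : ((X : Polynomial F) ^ n - 1).degree = (n : WithBot ℕ) := by
    have h := degree_X_pow_sub_C hn0 (1 : F)
    simpa using h
  have hroot : ∀ i : Fin n, ((X : Polynomial F) ^ n - 1).eval (α ^ (i : ℕ)) = 0 := by
    intro i
    have h : (α ^ (i : ℕ)) ^ n = 1 := by
      rw [← pow_mul, mul_comm, pow_mul, hαn, one_pow]
    simp [h]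
  -- the error interpolator
  set fe : Polynomial F := fu - a with hfe
  have ha_deg' : a.degree < (n : WithBot ℕ) :=
    lt_of_lt_of_le ha_deg (by exact_mod_cast hkn)
  have hfe_deg : fe.degree < (n : WithBot ℕ) :=
    lt_of_le_of_lt (degree_sub_le _ _) (max_lt hfu_deg ha_deg')
  have hfe_val : ∀ i : Fin n, fe.eval (α ^ (i : ℕ)) = e i := by
    intro i
    rw [hfe, eval_sub, hfu_val i, ← ha_val i]; ring
  -- low part g0
  set g0 : Polynomial F := fe - hu with hg0
  have hg0_deg : g0.degree < (k : WithBot ℕ) := by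
    rw [degree_lt_iff_coeff_zero]
    intro m hm
    have hm' : k ≤ m := by exact_mod_cast hm
    have hak : a.coeff m = 0 :=
      coeff_eq_zero_of_degree_lt (lt_of_lt_of_le ha_deg (by exact_mod_cast hm'))
    simp [hg0, hfe, coeff_sub, hhu m, Nat.not_lt.mpr hm', hak]
  have hfeq : fe = hu + g0 := by rw [hg0]; ring
  have htn : t ≤ n := by
    rw [htw]
    exact (Finset.card_filter_le _ _).trans (by simp)
  -- generic divisibility criterion
  have hdvd_gen : ∀ p : Polynomial F, (∀ i : Fin n, p.eval (α ^ (i : ℕ)) = 0) →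
      ((X : Polynomial F) ^ n - 1) ∣ p := by
    intro p hp
    rw [← modByMonic_eq_zero_iff_dvd hXn_monic]
    have hr_deg : (p %ₘ ((X : Polynomial F) ^ n - 1)).degree < (n : WithBot ℕ) :=
      hXn_deg ▸ degree_modByMonic_lt p hXn_monic
    have hr_eval : ∀ i : Fin n, (p %ₘ ((X : Polynomial F) ^ n - 1)).eval (α ^ (i : ℕ)) = 0 := by
      intro i
      have h := modByMonic_add_div p ((X : Polynomial F) ^ n - 1)
      have h2 := congrArg (Polynomial.eval (α ^ (i : ℕ))) h
      simp only [eval_add, eval_mul, hroot i, zero_mul, add_zero] at h2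
      rw [h2, hp i]
    refine eq_zero_of_degree_lt_of_eval_index_eq_zero (Finset.univ : Finset (Fin n))
      (fun x _ y _ h => hinj h) ?_ (fun i _ => hr_eval i)
    simpa using hr_deg
  -- the error locator is in Λ
  set S : Finset (Fin n) := Finset.univ.filter (fun i => e i ≠ 0) with hS
  set locator : Polynomial F := ∏ i ∈ S, (X - C (α ^ (i : ℕ))) with hloc
  have hloc_monic : locator.Monic := monic_prod_of_monic _ _ fun i _ => monic_X_sub_C _
  have hloc_natdeg : locator.natDegree = t := by
    rw [hloc, natDegree_prod _ _ fun i _ => X_sub_C_ne_zero _]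
    simp only [natDegree_X_sub_C]
    rw [Finset.sum_const, smul_eq_mul, mul_one, htw]
  have hloc_mem : ∃ g : Polynomial F, g.degree < (k : WithBot ℕ) ∧
      ((X : Polynomial F) ^ n - 1) ∣ locator * (hu + g) := by
    refine ⟨g0, hg0_deg, hdvd_gen _ ?_⟩
    intro i
    rw [← hfeq, eval_mul, hfe_val i]
    by_cases hi : e i = 0
    · rw [hi, mul_zero]
    · have hz : locator.eval (α ^ (i : ℕ)) = 0 := by
        rw [hloc, eval_prod]
        apply Finset.prod_eq_zero (Finset.mem_filter.2 ⟨Finset.mem_univ i, hi⟩)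
        simp
      rw [hz, zero_mul]
  have hlu_deg : lu.natDegree ≤ t := by
    have h := hlu_min locator hloc_monic hloc_mem
    rw [degree_eq_natDegree hloc_monic.ne_zero, hloc_natdeg] at h
    exact natDegree_le_iff_degree_le.2 h
  -- key divisibility : (X^n - 1) ∣ lu * fe
  obtain ⟨g, hg_deg, hg_dvd⟩ := hlu_mem
  set r : Polynomial F := lu * (g0 - g) with hr
  have hkey : lu * fe = lu * (hu + g) + r := by rw [hr, hfeq]; ring
  have hr_deg : r.degree < ((n - t : ℕ) : WithBot ℕ) := by
    rcases eq_or_ne r 0 with h | h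
    · rw [h, degree_zero]; exact WithBot.bot_lt_coe _
    · rw [degree_eq_natDegree h, Nat.cast_lt]
      have h1 : r.natDegree ≤ lu.natDegree + (g0 - g).natDegree := natDegree_mul_le
      have h2 : (g0 - g).natDegree ≤ k - 1 := by
        rcases eq_or_ne (g0 - g) 0 with h0 | h0
        · simp [h0]
        · have hd : (g0 - g).degree < (k : WithBot ℕ) :=
            lt_of_le_of_lt (degree_sub_le _ _) (max_lt hg0_deg hg_deg)
          have := (natDegree_lt_iff_degree_lt h0).2 hd
          omega
      omega
  set S0 : Finset (Fin n) := Finset.univ.filter (fun i => e i = 0) with hS0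
  have hS0card : S0.card = n - t := by
    have h := Finset.card_filter_add_card_filter_not
      (s := (Finset.univ : Finset (Fin n))) (p := fun i => e i = 0)
    simp only [Finset.card_univ, Fintype.card_fin] at h
    have h2 : (Finset.univ.filter (fun i : Fin n => ¬ e i = 0)) = S := by
      rw [hS]
    rw [h2] at h
    rw [hS0]
    omega
  have hr_zero : r = 0 := by
    have hr_eq : r = lu * fe - lu * (hu + g) := by rw [hkey]; ring
    obtain ⟨w, hw⟩ := hg_dvd
    refine eq_zero_of_degree_lt_of_eval_index_eq_zero S0 (fun x _ y _ h => hinj h)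
      (by rw [hS0card]; exact hr_deg) ?_
    intro i hi
    have hei : e i = 0 := (Finset.mem_filter.1 hi).2
    rw [hr_eq, eval_sub, eval_mul, hfe_val i, hei, mul_zero, hw, eval_mul, hroot i,
      zero_mul, sub_zero]
  have hdvd_fe : ((X : Polynomial F) ^ n - 1) ∣ lu * fe := by
    rw [hkey, hr_zero, add_zero]; exact hg_dvd
  have hdvd_Pa : ((X : Polynomial F) ^ n - 1) ∣ lu * fu - lu * a := by
    have h : lu * fu - lu * a = lu * fe := by rw [hfe]; ring
    rw [h]; exact hdvd_fe
  -- degree bookkeeping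
  have hdun : du < n := by
    rcases eq_or_ne fu 0 with h | h
    · show fu.natDegree < n; rw [h, natDegree_zero]; exact hn0
    · show fu.natDegree < n
      exact (natDegree_lt_iff_degree_lt h).2 hfu_deg
  have hP_deg : (lu * fu).natDegree ≤ du + t := by
    have h1 : (lu * fu).natDegree ≤ lu.natDegree + fu.natDegree := natDegree_mul_le
    have : fu.natDegree = du := rfl
    omega
  -- coefficients of μ
  have hμ_coeff : ∀ m' : ℕ, μ.coeff m' =
      ∑ j ∈ Finset.Icc n (du + t), if j - n = m' then (lu * fu).coeff j else 0 := by
    intro m'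
    rw [finset_sum_coeff]
    refine Finset.sum_congr rfl fun j _ => ?_
    rw [coeff_C_mul, coeff_X_pow]
    by_cases h : m' = j - n
    · simp [h]
    · simp [h, Ne.symm h]
  have hμ_coeff_ge : ∀ m : ℕ, n ≤ m →
      μ.coeff (m - n) = if m ≤ du + t then (lu * fu).coeff m else 0 := by
    intro m hm
    rw [hμ_coeff]
    have hc : ∀ j ∈ Finset.Icc n (du + t),
        (if j - n = m - n then (lu * fu).coeff j else 0)
          = if j = m then (lu * fu).coeff j else 0 := by
      intro j hj
      have hj' := Finset.mem_Icc.1 hj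
      by_cases h : j = m
      · simp [h]
      · have h2 : j - n ≠ m - n := by omega
        simp [h, h2]
    rw [Finset.sum_congr rfl hc, Finset.sum_ite_eq' (Finset.Icc n (du + t)) m]
    by_cases h : m ≤ du + t
    · rw [if_pos (Finset.mem_Icc.2 ⟨hm, h⟩), if_pos h]
    · rw [if_neg (fun hmem => h (Finset.mem_Icc.1 hmem).2), if_neg h]
  have hμ_high : ∀ m : ℕ, n ≤ m → μ.coeff m = 0 := by
    intro m hm
    rw [hμ_coeff]
    refine Finset.sum_eq_zero fun j hj => ?_
    have hj' := Finset.mem_Icc.1 hj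
    have h2 : j - n ≠ m := by omega
    simp [h2]
  -- degree of Q := lu*fu - (X^n-1)*μ
  have hQ_deg : (lu * fu - ((X : Polynomial F) ^ n - 1) * μ).degree < (n : WithBot ℕ) := by
    rw [degree_lt_iff_coeff_zero]
    intro m hm
    have hm' : n ≤ m := by exact_mod_cast hm
    rw [coeff_sub, sub_mul, one_mul, coeff_sub]
    have h1 : ((X : Polynomial F) ^ n * μ).coeff m = μ.coeff (m - n) := by
      conv_lhs => rw [show m = (m - n) + n by omega]
      exact coeff_X_pow_mul μ n (m - n)
    rw [h1, hμ_high m hm', hμ_coeff_ge m hm']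
    by_cases h : m ≤ du + t
    · rw [if_pos h]; ring
    · have hz : (lu * fu).coeff m = 0 :=
        coeff_eq_zero_of_natDegree_lt (lt_of_le_of_lt hP_deg (by omega))
      rw [if_neg h, hz]; ring
  have hla_deg : (lu * a).degree < (n : WithBot ℕ) := by
    rcases eq_or_ne a 0 with h | h
    · rw [h, mul_zero, degree_zero]; exact WithBot.bot_lt_coe _
    · have hne : lu * a ≠ 0 := mul_ne_zero hlu_monic.ne_zero h
      rw [degree_eq_natDegree hne, Nat.cast_lt]
      have h1 : (lu * a).natDegree ≤ lu.natDegree + a.natDegree := natDegree_mul_le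
      have h2 : a.natDegree < k := (natDegree_lt_iff_degree_lt h).2 ha_deg
      omega
  have hQ_eq : lu * fu - ((X : Polynomial F) ^ n - 1) * μ = lu * a := by
    have hdvd : ((X : Polynomial F) ^ n - 1) ∣
        (lu * fu - ((X : Polynomial F) ^ n - 1) * μ - lu * a) := by
      have h : lu * fu - ((X : Polynomial F) ^ n - 1) * μ - lu * a
          = (lu * fu - lu * a) - ((X : Polynomial F) ^ n - 1) * μ := by ring
      rw [h]
      exact dvd_sub hdvd_Pa (Dvd.intro μ rfl)
    have hdeg : (lu * fu - ((X : Polynomial F) ^ n - 1) * μ - lu * a).degree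
        < ((X : Polynomial F) ^ n - 1).degree := by
      rw [hXn_deg]
      exact lt_of_le_of_lt (degree_sub_le _ _) (max_lt hQ_deg hla_deg)
    have hz := eq_zero_of_dvd_of_degree_lt hdvd hdeg
    exact sub_eq_zero.mp hz
  have hgc : gc = a := by
    show (lu * fu - ((X : Polynomial F) ^ n - 1) * μ) /ₘ lu = a
    rw [hQ_eq, mul_divByMonic_cancel_left a hlu_monic]
  exact ⟨⟨a, hQ_eq⟩, hgc ▸ ha_deg, fun i => by rw [hgc, ← ha_val i]⟩
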